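/- Fix ω₁, ω₂ ∈ ℂ∖{0} with Im(ω₁/ω₂) > 0, set q = exp(πiω₁/ω₂), q̃ = exp(πiω₂/ω₁), let g > 0, write g^w := exp(w·ln g), and fix λ ∈ ℂ. Let 𝒮(z) = (∏_{m=0}^∞ (1 − q^{2m}·e^{2πiz/ω₂})) / (∏_{m=1}^∞ (1 − q̃^{−2m}·e^{2πiz/ω₁})), and define the Whittaker vector Φ¹(t) = 𝒮(−it + ω₁ + ω₂ + λ/2 − (iω₁ω₂/(2π))·ln g)⁻¹. Then for every t ∈ ℂ at which 𝒮 is defined (denominator factors nonzero) and nonvanishing at the three arguments involved, Φ¹ satisfies the pair of dual difference equations: (1 − g^{ω₁}·e^{2πt/ω₂ + πiλ/ω₂})·Φ¹(t − iω₁) = Φ¹(t) and (1 − g^{ω₂}·e^{2πt/ω₁ + πiλ/ω₁})·Φ¹(t − iω₂) = Φ¹(t). -/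

import Mathlib

set_option maxHeartbeats 1000000



/-- `qparam ω₁ ω₂ = exp(πi·ω₁/ω₂)`; then `q = qparam ω₁ ω₂` and
`q̃ = qparam ω₂ ω₁`. -/
noncomputable def qparam (ω₁ ω₂ : ℂ) : ℂ :=
  Complex.exp ((Real.pi : ℂ) * Complex.I * ω₁ / ω₂)

/-- The function `𝒮(z) = ∏_{m≥0}(1 − q^{2m}·e^{2πiz/ω₂}) / ∏_{m≥1}(1 − q̃^{−2m}·e^{2πiz/ω₁})`. -/
noncomputable def Sfun (ω₁ ω₂ z : ℂ) : ℂ :=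
  (∏' m : ℕ, (1 - qparam ω₁ ω₂ ^ (2 * m) *
      Complex.exp (2 * (Real.pi : ℂ) * Complex.I * z / ω₂))) /
  (∏' m : ℕ, (1 - qparam ω₂ ω₁ ^ (-(2 * ((m : ℤ) + 1))) *
      Complex.exp (2 * (Real.pi : ℂ) * Complex.I * z / ω₁)))

/-- The numerator infinite product of `𝒮` at `z`. -/
noncomputable def SnumProd (ω₁ ω₂ z : ℂ) : ℂ :=
  ∏' m : ℕ, (1 - qparam ω₁ ω₂ ^ (2 * m) *
    Complex.exp (2 * (Real.pi : ℂ) * Complex.I * z / ω₂))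

/-- `𝒮` is defined (all denominator factors nonzero) and nonvanishing at `z`. -/
def SDefinedNeZero (ω₁ ω₂ z : ℂ) : Prop :=
  (∀ m : ℕ, 1 ≤ m →
    1 - qparam ω₂ ω₁ ^ (-(2 * (m : ℤ))) *
      Complex.exp (2 * (Real.pi : ℂ) * Complex.I * z / ω₁) ≠ 0) ∧
  SnumProd ω₁ ω₂ z ≠ 0

/-- The argument of `𝒮` in the Whittaker vector `Φ¹`:
`−it + ω₁ + ω₂ + λ/2 − (iω₁ω₂/(2π))·ln g`. -/
noncomputable def phi1Arg (ω₁ ω₂ : ℂ) (g : ℝ) (lam t : ℂ) : ℂ :=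
  -(Complex.I * t) + ω₁ + ω₂ + lam / 2
    - Complex.I * ω₁ * ω₂ / (2 * (Real.pi : ℂ)) * (Real.log g : ℂ)

/-- The Whittaker vector `Φ¹(t) = 𝒮(−it + ω₁ + ω₂ + λ/2 − (iω₁ω₂/(2π))·ln g)⁻¹`. -/
noncomputable def Phi1 (ω₁ ω₂ : ℂ) (g : ℝ) (lam t : ℂ) : ℂ :=
  (Sfun ω₁ ω₂ (phi1Arg ω₁ ω₂ g lam t))⁻¹



open Complex Filter

private lemma factor_ne_zero {f : ℕ → ℂ} (h : (∏' m, f m) ≠ 0) (m : ℕ) : f m ≠ 0 := by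
  intro h0
  apply h
  have hp : HasProd f 0 := by
    have hev : (fun s : Finset ℕ => ∏ i ∈ s, f i) =ᶠ[atTop] fun _ => 0 := by
      filter_upwards [eventually_ge_atTop ({m} : Finset ℕ)] with s hs
      exact Finset.prod_eq_zero (hs (Finset.mem_singleton_self m)) h0
    exact Tendsto.congr' hev.symm tendsto_const_nhds
  exact hp.tprod_eq

private lemma summable_log_geom {a c : ℂ} (ha : ‖a‖ < 1) :
    Summable fun m : ℕ => Complex.log (1 - a ^ m * c) := by
  have h1 : Tendsto (fun m : ℕ => a ^ m) atTop (nhds 0) :=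
    tendsto_pow_atTop_nhds_zero_of_norm_lt_one ha
  have hten : Tendsto (fun m : ℕ => ‖a ^ m * c‖) atTop (nhds 0) := by
    simpa using (h1.mul_const c).norm
  have hev : ∀ᶠ m in atTop, ‖a ^ m * c‖ ≤ 1 / 2 :=
    hten.eventually_le_const (by norm_num)
  apply Summable.of_norm_bounded_eventually_nat (g := fun m => (3 / 2 * ‖c‖) * ‖a‖ ^ m)
  · exact (summable_geometric_of_lt_one (norm_nonneg a) ha).mul_left _
  · filter_upwards [hev] with m hm
    have h2 : ‖Complex.log (1 + -(a ^ m * c))‖ ≤ 3 / 2 * ‖-(a ^ m * c)‖ :=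
      Complex.norm_log_one_add_half_le_self (by simpa using hm)
    rw [show (1 : ℂ) - a ^ m * c = 1 + -(a ^ m * c) by ring]
    calc ‖Complex.log (1 + -(a ^ m * c))‖ ≤ 3 / 2 * ‖-(a ^ m * c)‖ := h2
      _ = 3 / 2 * ‖c‖ * ‖a‖ ^ m := by
          rw [norm_neg, norm_mul, norm_pow]; ring

private lemma multipliable_geom {a c : ℂ} (ha : ‖a‖ < 1)
    (h : ∀ m : ℕ, 1 - a ^ m * c ≠ 0) :
    Multipliable fun m : ℕ => 1 - a ^ m * c := by
  have := Complex.multipliable_of_summable_log (summable_log_geom (c := c) ha)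
  simpa using this

private lemma tprod_geom_shift {a : ℂ} (c : ℂ) (ha : ‖a‖ < 1)
    (h : ∀ m : ℕ, 1 - a ^ m * c ≠ 0) :
    (∏' m : ℕ, (1 - a ^ m * c)) = (1 - c) * ∏' m : ℕ, (1 - a ^ m * (a * c)) := by
  have hfe : (fun m : ℕ => 1 - a ^ m * (a * c)) = fun m : ℕ => 1 - a ^ (m + 1) * c :=
    funext fun m => by rw [pow_succ]; ring
  have hm : Multipliable fun m : ℕ => 1 - a ^ (m + 1) * c := by
    rw [← hfe]
    exact multipliable_geom ha fun m => by
      rw [show a ^ m * (a * c) = a ^ (m + 1) * c by rw [pow_succ]; ring]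
      exact h (m + 1)
  rw [tprod_eq_zero_mul' hm]
  simp only [pow_zero, one_mul]
  congr 1
  rw [← hfe]

/-- The denominator infinite product of `𝒮` at `z`. -/
private noncomputable def Dprod (ω₁ ω₂ z : ℂ) : ℂ :=
  ∏' m : ℕ, (1 - qparam ω₂ ω₁ ^ (-(2 * ((m : ℤ) + 1))) *
    Complex.exp (2 * (Real.pi : ℂ) * Complex.I * z / ω₁))

private lemma Sfun_eq_div (ω₁ ω₂ z : ℂ) :
    Sfun ω₁ ω₂ z = SnumProd ω₁ ω₂ z / Dprod ω₁ ω₂ z := rfl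

/-- The Whittaker vector `Φ¹` satisfies the pair of dual difference equations
`(1 − g^{ω₁}·e^{2πt/ω₂ + πiλ/ω₂})·Φ¹(t − iω₁) = Φ¹(t)` and
`(1 − g^{ω₂}·e^{2πt/ω₁ + πiλ/ω₁})·Φ¹(t − iω₂) = Φ¹(t)`. -/
theorem whittaker_vector_Phi1_difference_equations
    (ω₁ ω₂ : ℂ) (hω₁ : ω₁ ≠ 0) (hω₂ : ω₂ ≠ 0) (him : 0 < (ω₁ / ω₂).im)
    (g : ℝ) (hg : 0 < g) (lam t : ℂ)
    (h1 : SDefinedNeZero ω₁ ω₂ (phi1Arg ω₁ ω₂ g lam t))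
    (h2 : SDefinedNeZero ω₁ ω₂ (phi1Arg ω₁ ω₂ g lam t - ω₁))
    (h3 : SDefinedNeZero ω₁ ω₂ (phi1Arg ω₁ ω₂ g lam t - ω₂)) :
    (1 - Complex.exp (ω₁ * (Real.log g : ℂ)) *
          Complex.exp (2 * (Real.pi : ℂ) * t / ω₂ + (Real.pi : ℂ) * Complex.I * lam / ω₂)) *
        Phi1 ω₁ ω₂ g lam (t - Complex.I * ω₁) = Phi1 ω₁ ω₂ g lam t ∧
    (1 - Complex.exp (ω₂ * (Real.log g : ℂ)) *
          Complex.exp (2 * (Real.pi : ℂ) * t / ω₁ + (Real.pi : ℂ) * Complex.I * lam / ω₁)) *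
        Phi1 ω₁ ω₂ g lam (t - Complex.I * ω₂) = Phi1 ω₁ ω₂ g lam t := by
  obtain ⟨h1d, h1n⟩ := h1
  obtain ⟨h2d, h2n⟩ := h2
  obtain ⟨h3d, h3n⟩ := h3
  have hπ : (0 : ℝ) < Real.pi := Real.pi_pos
  have hπ0 : ((Real.pi : ℝ) : ℂ) ≠ 0 := by
    exact_mod_cast Complex.ofReal_ne_zero.mpr (ne_of_gt hπ)
  set z : ℂ := phi1Arg ω₁ ω₂ g lam t with hzdef
  set Q : ℂ := qparam ω₁ ω₂ ^ 2 with hQdef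
  set W : ℂ := (qparam ω₂ ω₁ ^ 2)⁻¹ with hWdef
  set c₂ : ℂ := Complex.exp (2 * (Real.pi : ℂ) * Complex.I * z / ω₂) with hc₂def
  set c₁ : ℂ := Complex.exp (2 * (Real.pi : ℂ) * Complex.I * z / ω₁) with hc₁def
  have hQ : Q = Complex.exp (2 * (Real.pi : ℂ) * Complex.I * ω₁ / ω₂) := by
    rw [hQdef, qparam, sq, ← Complex.exp_add]
    congr 1; ring
  have hW : W = Complex.exp (-(2 * (Real.pi : ℂ) * Complex.I * ω₂ / ω₁)) := by
    rw [hWdef, qparam, sq, ← Complex.exp_add, ← Complex.exp_neg]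
    congr 1; ring
  have hQ0 : Q ≠ 0 := by rw [hQ]; exact Complex.exp_ne_zero _
  -- norms
  have hQnorm : ‖Q‖ < 1 := by
    rw [hQ, Complex.norm_exp]
    rw [show 2 * (Real.pi : ℂ) * Complex.I * ω₁ / ω₂
        = ((2 * Real.pi : ℝ) : ℂ) * (Complex.I * (ω₁ / ω₂)) by push_cast; ring]
    rw [Complex.re_ofReal_mul]
    simp only [Complex.mul_re, Complex.I_re, Complex.I_im, zero_mul, one_mul, zero_sub]
    apply Real.exp_lt_one_iff.mpr
    nlinarith
  have hWnorm : ‖W‖ < 1 := by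
    have him' : (ω₂ / ω₁).im < 0 := by
      rw [show ω₂ / ω₁ = (ω₁ / ω₂)⁻¹ by rw [inv_div], Complex.inv_im]
      apply div_neg_of_neg_of_pos (by linarith)
      exact Complex.normSq_pos.mpr (div_ne_zero hω₁ hω₂)
    rw [hW, Complex.norm_exp]
    rw [show -(2 * (Real.pi : ℂ) * Complex.I * ω₂ / ω₁)
        = ((2 * Real.pi : ℝ) : ℂ) * (-(Complex.I * (ω₂ / ω₁))) by push_cast; ring]
    rw [Complex.re_ofReal_mul]
    simp only [Complex.neg_re, Complex.mul_re, Complex.I_re, Complex.I_im, zero_mul,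
      one_mul, zero_sub, neg_neg]
    apply Real.exp_lt_one_iff.mpr
    nlinarith
  -- canonical forms of the products
  have hnum : ∀ y : ℂ, SnumProd ω₁ ω₂ y
      = ∏' m : ℕ, (1 - Q ^ m * Complex.exp (2 * (Real.pi : ℂ) * Complex.I * y / ω₂)) := by
    intro y
    exact tprod_congr fun m => by rw [hQdef, ← pow_mul]
  have hzp : ∀ m : ℕ, qparam ω₂ ω₁ ^ (-(2 * ((m : ℤ) + 1))) = W ^ m * W := by
    intro m
    rw [show (-(2 * ((m : ℤ) + 1))) = -((2 * (m + 1) : ℕ) : ℤ) by push_cast; ring,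
      zpow_neg, zpow_natCast, pow_mul, ← inv_pow, pow_succ]
  have hden : ∀ y : ℂ, Dprod ω₁ ω₂ y
      = ∏' m : ℕ, (1 - W ^ m * (W * Complex.exp (2 * (Real.pi : ℂ) * Complex.I * y / ω₁))) := by
    intro y
    exact tprod_congr fun m => by rw [hzp m, mul_assoc]
  -- exponential shifts
  have hc₂₁ : Complex.exp (2 * (Real.pi : ℂ) * Complex.I * (z - ω₁) / ω₂) = Q⁻¹ * c₂ := by
    rw [hQ, ← Complex.exp_neg, hc₂def, ← Complex.exp_add]
    congr 1; ring
  have h2piexp : Complex.exp (-(2 * (Real.pi : ℂ) * Complex.I)) = 1 := by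
    rw [Complex.exp_neg, Complex.exp_two_pi_mul_I, inv_one]
  have hc₂₂ : Complex.exp (2 * (Real.pi : ℂ) * Complex.I * (z - ω₂) / ω₂) = c₂ := by
    rw [show 2 * (Real.pi : ℂ) * Complex.I * (z - ω₂) / ω₂
        = 2 * (Real.pi : ℂ) * Complex.I * z / ω₂ + -(2 * (Real.pi : ℂ) * Complex.I) by
      field_simp; ring]
    rw [Complex.exp_add, h2piexp, mul_one, hc₂def]
  have hc₁₁ : Complex.exp (2 * (Real.pi : ℂ) * Complex.I * (z - ω₁) / ω₁) = c₁ := by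
    rw [show 2 * (Real.pi : ℂ) * Complex.I * (z - ω₁) / ω₁
        = 2 * (Real.pi : ℂ) * Complex.I * z / ω₁ + -(2 * (Real.pi : ℂ) * Complex.I) by
      field_simp; ring]
    rw [Complex.exp_add, h2piexp, mul_one, hc₁def]
  have hc₁₂ : Complex.exp (2 * (Real.pi : ℂ) * Complex.I * (z - ω₂) / ω₁) = W * c₁ := by
    rw [hW, hc₁def, ← Complex.exp_add]
    congr 1; ring
  -- rewritten products at the three points
  have hNz1 : SnumProd ω₁ ω₂ (z - ω₁) = ∏' m : ℕ, (1 - Q ^ m * (Q⁻¹ * c₂)) := by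
    rw [hnum]; exact tprod_congr fun m => by rw [hc₂₁]
  have hNz2 : SnumProd ω₁ ω₂ (z - ω₂) = SnumProd ω₁ ω₂ z := by
    rw [hnum, hnum]; exact tprod_congr fun m => by rw [hc₂₂, hc₂def]
  have hDz1 : Dprod ω₁ ω₂ (z - ω₁) = Dprod ω₁ ω₂ z := by
    rw [hden, hden]; exact tprod_congr fun m => by rw [hc₁₁, hc₁def]
  have hDz2 : Dprod ω₁ ω₂ (z - ω₂) = ∏' m : ℕ, (1 - W ^ m * (W * (W * c₁))) := by
    rw [hden]; exact tprod_congr fun m => by rw [hc₁₂]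
  -- factor nonvanishing
  have hfacN : ∀ m : ℕ, 1 - Q ^ m * (Q⁻¹ * c₂) ≠ 0 := by
    intro m
    exact factor_ne_zero (hNz1 ▸ h2n) m
  have hA : 1 - Q⁻¹ * c₂ ≠ 0 := by simpa using hfacN 0
  have hfacD : ∀ m : ℕ, 1 - W ^ m * (W * c₁) ≠ 0 := by
    intro m
    have h := h1d (m + 1) (Nat.le_add_left 1 m)
    rw [show ((m + 1 : ℕ) : ℤ) = (m : ℤ) + 1 by push_cast; ring] at h
    rw [hzp m, mul_assoc] at h
    exact h
  have hB : 1 - W * c₁ ≠ 0 := by simpa using hfacD 0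
  -- the two product shift identities
  have hshiftN : SnumProd ω₁ ω₂ (z - ω₁) = (1 - Q⁻¹ * c₂) * SnumProd ω₁ ω₂ z := by
    rw [hNz1, tprod_geom_shift (Q⁻¹ * c₂) hQnorm hfacN, hnum z]
    congr 1
    exact tprod_congr fun m => by rw [mul_inv_cancel_left₀ hQ0, hc₂def]
  have hshiftD : Dprod ω₁ ω₂ z = (1 - W * c₁) * Dprod ω₁ ω₂ (z - ω₂) := by
    rw [hden z, hDz2, tprod_geom_shift (W * c₁) hWnorm hfacD, hc₁def]
  -- argument shifts
  have ht1 : phi1Arg ω₁ ω₂ g lam (t - Complex.I * ω₁) = z - ω₁ := by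
    rw [hzdef]; unfold phi1Arg
    linear_combination ω₁ * Complex.I_mul_I
  have ht2 : phi1Arg ω₁ ω₂ g lam (t - Complex.I * ω₂) = z - ω₂ := by
    rw [hzdef]; unfold phi1Arg
    linear_combination ω₂ * Complex.I_mul_I
  -- factor identifications
  have hper : ∀ u : ℂ, Complex.exp (u + 2 * (Real.pi : ℂ) * Complex.I) = Complex.exp u := by
    intro u
    rw [Complex.exp_add, Complex.exp_two_pi_mul_I, mul_one]
  have hAeq : Complex.exp (ω₁ * (Real.log g : ℂ)) *
      Complex.exp (2 * (Real.pi : ℂ) * t / ω₂ + (Real.pi : ℂ) * Complex.I * lam / ω₂)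
      = Q⁻¹ * c₂ := by
    rw [hQ, ← Complex.exp_neg, hc₂def, ← Complex.exp_add, ← Complex.exp_add,
      show -(2 * (Real.pi : ℂ) * Complex.I * ω₁ / ω₂) + 2 * (Real.pi : ℂ) * Complex.I * z / ω₂
        = (ω₁ * (Real.log g : ℂ) + (2 * (Real.pi : ℂ) * t / ω₂
            + (Real.pi : ℂ) * Complex.I * lam / ω₂)) + 2 * (Real.pi : ℂ) * Complex.I from ?_,
      hper]
    rw [hzdef]; unfold phi1Arg
    field_simp
    ring_nf
    rw [Complex.I_sq]
    field_simp
    ring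
  have hBeq : Complex.exp (ω₂ * (Real.log g : ℂ)) *
      Complex.exp (2 * (Real.pi : ℂ) * t / ω₁ + (Real.pi : ℂ) * Complex.I * lam / ω₁)
      = W * c₁ := by
    rw [hW, hc₁def, ← Complex.exp_add, ← Complex.exp_add,
      show -(2 * (Real.pi : ℂ) * Complex.I * ω₂ / ω₁) + 2 * (Real.pi : ℂ) * Complex.I * z / ω₁
        = (ω₂ * (Real.log g : ℂ) + (2 * (Real.pi : ℂ) * t / ω₁
            + (Real.pi : ℂ) * Complex.I * lam / ω₁)) + 2 * (Real.pi : ℂ) * Complex.I from ?_,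
      hper]
    rw [hzdef]; unfold phi1Arg
    field_simp
    ring_nf
    rw [Complex.I_sq]
    field_simp
    ring
  constructor
  · rw [Phi1, Phi1, ht1, ← hzdef, hAeq]
    rw [Sfun_eq_div, Sfun_eq_div, hshiftN, hDz1, mul_div_assoc]
    rw [mul_inv, ← mul_assoc, mul_inv_cancel₀ hA, one_mul]
  · rw [Phi1, Phi1, ht2, ← hzdef, hBeq]
    rw [Sfun_eq_div, Sfun_eq_div, hNz2, hshiftD]
    rw [inv_div, inv_div, ← mul_div_assoc, mul_comm (1 - W * c₁)]
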